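/- Let x₁, …, x_N be pairwise distinct points in ℝ^d and let C > 0. Then the N × N multiquadric kernel matrix K with entries K_{ij} = √(C² + ‖x_i − x_j‖²) (Euclidean norm) is invertible. -/

import Mathlib

open MeasureTheory Real Set
open scoped ENNReal

noncomputable def mqF (a s : ℝ) : ℝ := s ^ (-(3:ℝ)/2) * (1 - Real.exp (-(a*s)))

noncomputable def mqI (a : ℝ) : ℝ := ∫ s in Set.Ioi (0:ℝ), mqF a s

lemma mqF_nonneg {a s : ℝ} (ha : 0 ≤ a) (hs : 0 ≤ s) : 0 ≤ mqF a s := by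
  apply mul_nonneg (Real.rpow_nonneg hs _)
  simp only [sub_nonneg]
  exact Real.exp_le_one_iff.mpr (by nlinarith)

lemma mqF_contOn (a : ℝ) : ContinuousOn (mqF a) (Ioi (0:ℝ)) := by
  apply ContinuousOn.mul
  · intro s hs
    exact (Real.continuousAt_rpow_const s _ (Or.inl (ne_of_gt hs))).continuousWithinAt
  · exact (continuous_const.sub ((continuous_const.mul continuous_id).neg.rexp)).continuousOn

lemma mq_integrable {a : ℝ} (ha : 0 ≤ a) : IntegrableOn (mqF a) (Ioi (0:ℝ)) := by
  rw [← Ioc_union_Ioi_eq_Ioi (zero_le_one (α := ℝ)), integrableOn_union]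
  constructor
  · -- on (0,1]: mqF a s ≤ a * s^(-1/2)
    have hbig : IntegrableOn (fun s : ℝ => a * s ^ (-(1:ℝ)/2)) (Ioc (0:ℝ) 1) := by
      apply Integrable.const_mul
      have h := intervalIntegral.intervalIntegrable_rpow' (a := (0:ℝ)) (b := 1)
        (r := -(1:ℝ)/2) (by norm_num)
      rw [intervalIntegrable_iff_integrableOn_Ioc_of_le zero_le_one] at h
      exact h
    refine hbig.mono' (((mqF_contOn a).mono Ioc_subset_Ioi_self).aestronglyMeasurable
      measurableSet_Ioc) ?_
    filter_upwards [ae_restrict_mem measurableSet_Ioc] with s hs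
    rcases hs with ⟨hs0, hs1⟩
    rw [Real.norm_of_nonneg (mqF_nonneg ha hs0.le)]
    have h1 : 1 - Real.exp (-(a*s)) ≤ a * s := by
      nlinarith [Real.add_one_le_exp (-(a*s))]
    calc mqF a s ≤ s ^ (-(3:ℝ)/2) * (a * s) :=
          mul_le_mul_of_nonneg_left h1 (Real.rpow_nonneg hs0.le _)
      _ = a * (s ^ (-(3:ℝ)/2) * s ^ (1:ℝ)) := by rw [Real.rpow_one]; ring
      _ = a * s ^ (-(1:ℝ)/2) := by rw [← Real.rpow_add hs0]; norm_num
  · -- on (1,∞): mqF a s ≤ s^(-3/2)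
    have hbig : IntegrableOn (fun s : ℝ => s ^ (-(3:ℝ)/2)) (Ioi (1:ℝ)) := by
      have := integrableOn_Ioi_rpow_of_lt (a := -(3:ℝ)/2) (by norm_num) zero_lt_one
      norm_num at this ⊢
      exact this
    refine hbig.mono' (((mqF_contOn a).mono (Ioi_subset_Ioi zero_le_one)).aestronglyMeasurable
      measurableSet_Ioi) ?_
    filter_upwards [ae_restrict_mem measurableSet_Ioi] with s hs
    have hs0 : (0:ℝ) < s := lt_trans zero_lt_one hs
    rw [Real.norm_of_nonneg (mqF_nonneg ha hs0.le)]
    have h1 : 1 - Real.exp (-(a*s)) ≤ 1 := by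
      have := Real.exp_pos (-(a*s)); linarith
    calc mqF a s ≤ s ^ (-(3:ℝ)/2) * 1 :=
          mul_le_mul_of_nonneg_left h1 (Real.rpow_nonneg hs0.le _)
      _ = s ^ (-(3:ℝ)/2) := mul_one _

lemma mq_scale {a : ℝ} (ha : 0 < a) : mqI a = Real.sqrt a * mqI 1 := by
  have key : ∀ s ∈ Ioi (0:ℝ), mqF a s = a ^ ((3:ℝ)/2) * mqF 1 (a * s) := by
    intro s hs
    have hs0 : (0:ℝ) < s := hs
    simp only [mqF, one_mul]
    rw [Real.mul_rpow ha.le hs0.le]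
    have h : a ^ ((3:ℝ)/2) * a ^ (-(3:ℝ)/2) = 1 := by
      rw [← Real.rpow_add ha]; norm_num
    linear_combination (s ^ (-(3:ℝ)/2) * (Real.exp (-(a*s)) - 1)) * h
  have h1 : mqI a = ∫ s in Ioi (0:ℝ), a ^ ((3:ℝ)/2) * mqF 1 (a * s) := by
    apply setIntegral_congr_fun measurableSet_Ioi
    intro s hs; exact key s hs
  rw [h1, integral_const_mul]
  have h2 : ∫ s in Ioi (0:ℝ), mqF 1 (a * s) = a⁻¹ * mqI 1 := by
    have := integral_comp_mul_left_Ioi (mqF 1) 0 ha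
    simp only [mul_zero, smul_eq_mul] at this
    rw [this]; rfl
  rw [h2, ← mul_assoc]
  congr 1
  rw [← Real.rpow_neg_one a, ← Real.rpow_add ha, Real.sqrt_eq_rpow]
  norm_num

lemma mqI_one_pos : 0 < mqI 1 := by
  rw [mqI, setIntegral_pos_iff_support_of_nonneg_ae]
  · have hsub : Ioi (0:ℝ) ⊆ Function.support (mqF 1) ∩ Ioi 0 := by
      intro s hs
      refine ⟨?_, hs⟩
      have hs0 : (0:ℝ) < s := hs
      have h1 : (0:ℝ) < s ^ (-(3:ℝ)/2) := Real.rpow_pos_of_pos hs0 _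
      have h2 : Real.exp (-(1*s)) < 1 := by
        rw [Real.exp_lt_one_iff]; linarith
      simp only [Function.mem_support, mqF]
      exact ne_of_gt (mul_pos h1 (by linarith))
    calc (0:ℝ≥0∞) < volume (Ioi (0:ℝ)) := by simp
      _ ≤ volume (Function.support (mqF 1) ∩ Ioi 0) := measure_mono hsub
  · filter_upwards [ae_restrict_mem measurableSet_Ioi] with s hs
    exact mqF_nonneg zero_le_one (le_of_lt hs)
  · exact mq_integrable zero_le_one

lemma sqrt_eq_mqI {a : ℝ} (ha : 0 < a) : Real.sqrt a = mqI a / mqI 1 := by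
  rw [mq_scale ha, mul_div_assoc, div_self (ne_of_gt mqI_one_pos), mul_one]


-- B1: powers of the dot product are PSD
lemma dot_pow_psd (d N n : ℕ) (y : Fin N → Fin d → ℝ) (v : Fin N → ℝ) :
    0 ≤ ∑ i, ∑ j, v i * v j * (∑ k, y i k * y j k) ^ n := by
  classical
  set G := Fintype.piFinset (fun _ : Fin n => (Finset.univ : Finset (Fin d))) with hG
  have expand : ∀ i j : Fin N, (∑ k, y i k * y j k) ^ n
      = ∑ g ∈ G, (∏ t, y i (g t)) * (∏ t, y j (g t)) := by
    intro i j
    have h1 : (∑ k, y i k * y j k) ^ n = ∏ _t : Fin n, (∑ k, y i k * y j k) := by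
      rw [Finset.prod_const, Finset.card_univ, Fintype.card_fin]
    rw [h1, Finset.prod_univ_sum]
    exact Finset.sum_congr rfl fun g _ => by rw [Finset.prod_mul_distrib]
  have key : ∑ i, ∑ j, v i * v j * (∑ k, y i k * y j k) ^ n
      = ∑ g ∈ G, (∑ i, v i * ∏ t, y i (g t)) ^ 2 := by
    calc ∑ i, ∑ j, v i * v j * (∑ k, y i k * y j k) ^ n
        = ∑ i, ∑ j, ∑ g ∈ G, (v i * ∏ t, y i (g t)) * (v j * ∏ t, y j (g t)) := by
          refine Finset.sum_congr rfl fun i _ => Finset.sum_congr rfl fun j _ => ?_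
          rw [expand i j, Finset.mul_sum]
          exact Finset.sum_congr rfl fun g _ => by ring
      _ = ∑ i, ∑ g ∈ G, ∑ j, (v i * ∏ t, y i (g t)) * (v j * ∏ t, y j (g t)) := by
          exact Finset.sum_congr rfl fun i _ => Finset.sum_comm
      _ = ∑ g ∈ G, ∑ i, ∑ j, (v i * ∏ t, y i (g t)) * (v j * ∏ t, y j (g t)) :=
          Finset.sum_comm
      _ = ∑ g ∈ G, (∑ i, v i * ∏ t, y i (g t)) ^ 2 := by
          refine Finset.sum_congr rfl fun g _ => ?_
          rw [sq, Finset.sum_mul_sum]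
  rw [key]
  exact Finset.sum_nonneg fun g _ => sq_nonneg _

-- B2: exp of the dot product is PSD
lemma exp_dot_psd (d N : ℕ) (y : Fin N → Fin d → ℝ) (v : Fin N → ℝ) :
    0 ≤ ∑ i, ∑ j, v i * v j * Real.exp (∑ k, y i k * y j k) := by
  classical
  have hexp : ∀ t : ℝ, Real.exp t = ∑' m : ℕ, t ^ m / (Nat.factorial m : ℝ) := by
    intro t
    rw [Real.exp_eq_exp_ℝ, NormedSpace.exp_eq_tsum_div]
  have hsummable : ∀ (c a b : ℝ), Summable (fun m : ℕ => a * b * (c ^ m / (Nat.factorial m : ℝ))) := by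
    intro c a b
    exact (Real.summable_pow_div_factorial c).mul_left _
  calc (0:ℝ) ≤ ∑' m : ℕ, ∑ i, ∑ j, v i * v j * ((∑ k, y i k * y j k) ^ m / (Nat.factorial m : ℝ)) := by
        refine tsum_nonneg fun m => ?_
        have : ∑ i, ∑ j, v i * v j * ((∑ k, y i k * y j k) ^ m / (Nat.factorial m : ℝ))
            = (∑ i, ∑ j, v i * v j * (∑ k, y i k * y j k) ^ m) / (Nat.factorial m : ℝ) := by
          rw [Finset.sum_div]
          exact Finset.sum_congr rfl fun i _ => by
            rw [Finset.sum_div]; exact Finset.sum_congr rfl fun j _ => by ring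
        rw [this]
        exact div_nonneg (dot_pow_psd d N m y v) (by positivity)
    _ = ∑ i, ∑ j, v i * v j * Real.exp (∑ k, y i k * y j k) := by
        rw [Summable.tsum_finsetSum (fun i _ => by
          apply summable_sum
          intro j _
          exact hsummable _ _ _)]
        refine Finset.sum_congr rfl fun i _ => ?_
        rw [Summable.tsum_finsetSum (fun j _ => hsummable _ _ _)]
        refine Finset.sum_congr rfl fun j _ => ?_
        rw [hexp, ← tsum_mul_left]

-- B3: the Gaussian kernel is PSD
lemma gauss_psd (d N : ℕ) (x : Fin N → EuclideanSpace ℝ (Fin d)) (v : Fin N → ℝ)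
    {s : ℝ} (hs : 0 ≤ s) :
    0 ≤ ∑ i, ∑ j, v i * v j * Real.exp (-(s * ‖x i - x j‖ ^ 2)) := by
  classical
  set y : Fin N → Fin d → ℝ := fun i k => Real.sqrt (2*s) * x i k with hy
  set w : Fin N → ℝ := fun i => v i * Real.exp (-(s * ‖x i‖ ^ 2)) with hw
  have hinner : ∀ i j : Fin N, (inner ℝ (x i) (x j) : ℝ) = ∑ k, x i k * x j k := by
    intro i j
    rw [PiLp.inner_apply]
    simp [RCLike.inner_apply, conj_trivial, mul_comm]
  have hdot : ∀ i j : Fin N, ∑ k, y i k * y j k = 2 * s * ∑ k, x i k * x j k := by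
    intro i j
    have h2s : Real.sqrt (2*s) * Real.sqrt (2*s) = 2*s :=
      Real.mul_self_sqrt (by linarith)
    rw [Finset.mul_sum]
    exact Finset.sum_congr rfl fun k _ => by rw [hy]; ring_nf; rw [Real.sq_sqrt (by linarith)]; ring
  have hterm : ∀ i j : Fin N, v i * v j * Real.exp (-(s * ‖x i - x j‖ ^ 2))
      = w i * w j * Real.exp (∑ k, y i k * y j k) := by
    intro i j
    have hns : ‖x i - x j‖ ^ 2 = ‖x i‖ ^ 2 - 2 * (inner ℝ (x i) (x j) : ℝ) + ‖x j‖ ^ 2 :=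
      norm_sub_sq_real (x i) (x j)
    rw [hdot i j, ← hinner i j, hns, hw]
    simp only []
    rw [show -(s * (‖x i‖ ^ 2 - 2 * (inner ℝ (x i) (x j) : ℝ) + ‖x j‖ ^ 2))
        = (-(s * ‖x i‖^2)) + (-(s * ‖x j‖^2)) + (2 * s * (inner ℝ (x i) (x j) : ℝ)) by ring,
      Real.exp_add, Real.exp_add]
    ring
  calc (0:ℝ) ≤ ∑ i, ∑ j, w i * w j * Real.exp (∑ k, y i k * y j k) :=
        exp_dot_psd d N y w
    _ = ∑ i, ∑ j, v i * v j * Real.exp (-(s * ‖x i - x j‖ ^ 2)) := by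
        exact Finset.sum_congr rfl fun i _ => Finset.sum_congr rfl fun j _ => (hterm i j).symm

-- C: limit of the Gaussian quadratic form as s → ∞
lemma gauss_tendsto (d N : ℕ) (x : Fin N → EuclideanSpace ℝ (Fin d))
    (hx : Function.Injective x) (v : Fin N → ℝ) :
    Filter.Tendsto (fun s : ℝ => ∑ i, ∑ j, v i * v j * Real.exp (-(s * ‖x i - x j‖ ^ 2)))
      Filter.atTop (nhds (∑ i, v i ^ 2)) := by
  classical
  have h1 : (∑ i, v i ^ 2) = ∑ i : Fin N, ∑ j : Fin N, (if i = j then v i ^ 2 else 0) := by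
    simp [Finset.sum_ite_eq]
  rw [h1]
  apply tendsto_finset_sum
  intro i _
  apply tendsto_finset_sum
  intro j _
  by_cases hij : i = j
  · subst hij
    simp only [if_pos rfl]
    have heq : ∀ b : ℝ, v i * v i * Real.exp (-(b * ‖x i - x i‖ ^ 2)) = v i ^ 2 := by
      intro b; simp [sq]
    exact Filter.Tendsto.congr (fun b => (heq b).symm) tendsto_const_nhds
  · simp only [if_neg hij]
    have hc : 0 < ‖x i - x j‖ ^ 2 := by
      have : x i ≠ x j := fun h => hij (hx h)
      have h0 : x i - x j ≠ 0 := sub_ne_zero_of_ne this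
      exact pow_pos (norm_pos_iff.mpr h0) 2
    have hexp : Filter.Tendsto (fun s : ℝ => Real.exp (-(s * ‖x i - x j‖ ^ 2)))
        Filter.atTop (nhds 0) := by
      apply Real.tendsto_exp_atBot.comp
      apply Filter.tendsto_atBot_mono (fun s => le_refl _)
      have := Filter.Tendsto.atTop_mul_const hc (Filter.tendsto_id (α := ℝ))
      exact Filter.tendsto_neg_atBot_iff.mpr this |>.congr (fun s => rfl)
    have := hexp.const_mul (v i * v j)
    simpa using this

lemma quadform_neg (d N : ℕ) (C : ℝ) (hC : 0 < C) (x : Fin N → EuclideanSpace ℝ (Fin d))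
    (hx : Function.Injective x) (v : Fin N → ℝ) (hv : ∑ i, v i = 0) (hv0 : v ≠ 0) :
    ∑ i, ∑ j, v i * v j * Real.sqrt (C ^ 2 + ‖x i - x j‖ ^ 2) < 0 := by
  classical
  have ha : ∀ i j : Fin N, (0:ℝ) < C ^ 2 + ‖x i - x j‖ ^ 2 := fun i j => by positivity
  set F : ℝ → ℝ := fun s => ∑ i, ∑ j, v i * v j * Real.exp (-(s * ‖x i - x j‖ ^ 2)) with hF
  set Φ : ℝ → ℝ := fun s => s ^ (-(3:ℝ)/2) * Real.exp (-(C^2*s)) * F s with hΦ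
  -- rewrite the quadratic form as an integral
  have hQ : ∑ i, ∑ j, v i * v j * Real.sqrt (C ^ 2 + ‖x i - x j‖ ^ 2)
      = (∑ i, ∑ j, ∫ s in Ioi (0:ℝ), v i * v j * mqF (C ^ 2 + ‖x i - x j‖ ^ 2) s) / mqI 1 := by
    rw [Finset.sum_div]
    refine Finset.sum_congr rfl fun i _ => ?_
    rw [Finset.sum_div]
    refine Finset.sum_congr rfl fun j _ => ?_
    rw [sqrt_eq_mqI (ha i j), MeasureTheory.integral_const_mul, mqI]
    ring
  have hint : ∀ i j : Fin N,
      IntegrableOn (fun s => v i * v j * mqF (C ^ 2 + ‖x i - x j‖ ^ 2) s) (Ioi (0:ℝ)) :=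
    fun i j => (mq_integrable (ha i j).le).const_mul _
  have hswap : (∑ i, ∑ j, ∫ s in Ioi (0:ℝ), v i * v j * mqF (C ^ 2 + ‖x i - x j‖ ^ 2) s)
      = ∫ s in Ioi (0:ℝ), ∑ i, ∑ j, v i * v j * mqF (C ^ 2 + ‖x i - x j‖ ^ 2) s := by
    rw [MeasureTheory.integral_finset_sum _ (fun i _ =>
      integrable_finset_sum _ (fun j _ => hint i j))]
    exact Finset.sum_congr rfl fun i _ => (MeasureTheory.integral_finset_sum _
      (fun j _ => hint i j)).symm
  -- pointwise identity on Ioi 0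
  have hpt : ∀ s ∈ Ioi (0:ℝ),
      (∑ i, ∑ j, v i * v j * mqF (C ^ 2 + ‖x i - x j‖ ^ 2) s) = -Φ s := by
    intro s hs
    have hs0 : (0:ℝ) < s := hs
    have hterm : ∀ i j : Fin N, v i * v j * mqF (C ^ 2 + ‖x i - x j‖ ^ 2) s
        = v i * v j * s ^ (-(3:ℝ)/2)
          - s ^ (-(3:ℝ)/2) * Real.exp (-(C^2*s)) * (v i * v j * Real.exp (-(s * ‖x i - x j‖ ^ 2))) := by
      intro i j
      have hE : Real.exp (-((C ^ 2 + ‖x i - x j‖ ^ 2) * s))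
          = Real.exp (-(C^2*s)) * Real.exp (-(s * ‖x i - x j‖ ^ 2)) := by
        rw [← Real.exp_add]; ring_nf
      simp only [mqF]
      rw [hE]; ring
    calc (∑ i, ∑ j, v i * v j * mqF (C ^ 2 + ‖x i - x j‖ ^ 2) s)
        = ∑ i, ∑ j, (v i * v j * s ^ (-(3:ℝ)/2)
            - s ^ (-(3:ℝ)/2) * Real.exp (-(C^2*s)) * (v i * v j * Real.exp (-(s * ‖x i - x j‖ ^ 2)))) :=
          Finset.sum_congr rfl fun i _ => Finset.sum_congr rfl fun j _ => hterm i j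
      _ = (∑ i, ∑ j, v i * v j * s ^ (-(3:ℝ)/2))
            - s ^ (-(3:ℝ)/2) * Real.exp (-(C^2*s)) * F s := by
          simp only [Finset.sum_sub_distrib]
          congr 1
          simp only [hF, Finset.mul_sum]
      _ = ((∑ i, v i) * (∑ j, v j)) * s ^ (-(3:ℝ)/2)
            - s ^ (-(3:ℝ)/2) * Real.exp (-(C^2*s)) * F s := by
          congr 1
          rw [Finset.sum_mul_sum, Finset.sum_mul]
          refine Finset.sum_congr rfl fun i _ => ?_
          rw [Finset.sum_mul]
      _ = -Φ s := by rw [hv]; simp [hΦ]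
  -- integrability and nonnegativity of Φ
  have hΦint : IntegrableOn Φ (Ioi (0:ℝ)) := by
    have h1 : IntegrableOn (fun s => -(∑ i, ∑ j, v i * v j * mqF (C ^ 2 + ‖x i - x j‖ ^ 2) s))
        (Ioi (0:ℝ)) :=
      (integrable_finset_sum _ (fun i _ => integrable_finset_sum _ (fun j _ => hint i j))).neg
    exact h1.congr_fun (fun s hs => by beta_reduce; rw [hpt s hs, neg_neg]) measurableSet_Ioi
  have hΦnn : ∀ s ∈ Ioi (0:ℝ), 0 ≤ Φ s := by
    intro s hs
    have hs0 : (0:ℝ) < s := hs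
    have := gauss_psd d N x v hs0.le
    have h1 : (0:ℝ) ≤ s ^ (-(3:ℝ)/2) := Real.rpow_nonneg hs0.le _
    have h2 : (0:ℝ) ≤ Real.exp (-(C^2*s)) := (Real.exp_pos _).le
    exact mul_nonneg (mul_nonneg h1 h2) this
  -- positivity of the integral of Φ
  have hT : 0 < ∑ i, v i ^ 2 := by
    obtain ⟨i, hi⟩ := Function.ne_iff.mp hv0
    exact Finset.sum_pos' (fun i _ => sq_nonneg _) ⟨i, Finset.mem_univ i, lt_of_le_of_ne (sq_nonneg _) (Ne.symm (pow_ne_zero 2 hi))⟩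
  obtain ⟨s₀, hs₀⟩ := Filter.eventually_atTop.mp
    ((gauss_tendsto d N x hx v).eventually (eventually_ge_nhds (half_lt_self hT)))
  set s₁ : ℝ := max s₀ 1 with hs₁
  have hs₁pos : (0:ℝ) < s₁ := lt_of_lt_of_le zero_lt_one (le_max_right _ _)
  set ε : ℝ := (s₁+1) ^ (-(3:ℝ)/2) * Real.exp (-(C^2*(s₁+1))) * ((∑ i, v i ^ 2)/2) with hε
  have hεpos : 0 < ε := by
    apply mul_pos (mul_pos (Real.rpow_pos_of_pos (by linarith) _) (Real.exp_pos _))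
    linarith
  have hlow : ∀ s ∈ Ioc s₁ (s₁+1), ε ≤ Φ s := by
    intro s hs
    rcases hs with ⟨hsl, hsu⟩
    have hs0 : (0:ℝ) < s := lt_trans hs₁pos hsl
    have hFs : (∑ i, v i ^ 2)/2 ≤ F s := hs₀ s (le_trans (le_max_left _ _) hsl.le)
    have h1 : (s₁+1) ^ (-(3:ℝ)/2) ≤ s ^ (-(3:ℝ)/2) :=
      Real.rpow_le_rpow_of_nonpos hs0 hsu (by norm_num)
    have h2 : Real.exp (-(C^2*(s₁+1))) ≤ Real.exp (-(C^2*s)) := by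
      apply Real.exp_le_exp.mpr
      nlinarith
    calc ε ≤ s ^ (-(3:ℝ)/2) * Real.exp (-(C^2*s)) * ((∑ i, v i ^ 2)/2) := by
          apply mul_le_mul_of_nonneg_right _ (by linarith)
          exact mul_le_mul h1 h2 (Real.exp_pos _).le (Real.rpow_nonneg hs0.le _)
      _ ≤ Φ s := by
          apply mul_le_mul_of_nonneg_left hFs
          exact mul_nonneg (Real.rpow_nonneg hs0.le _) (Real.exp_pos _).le
  have hIpos : 0 < ∫ s in Ioi (0:ℝ), Φ s := by
    have hsub : Ioc s₁ (s₁+1) ⊆ Ioi (0:ℝ) := fun s hs => lt_trans hs₁pos hs.1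
    have h1 : ε * (volume (Ioc s₁ (s₁+1))).toReal ≤ ∫ s in Ioc s₁ (s₁+1), Φ s :=
      setIntegral_ge_of_const_le_real measurableSet_Ioc measure_Ioc_lt_top.ne hlow
        (hΦint.mono_set hsub)
    have h2 : (volume (Ioc s₁ (s₁+1))).toReal = 1 := by
      rw [Real.volume_Ioc]
      norm_num
    have h3 : ∫ s in Ioc s₁ (s₁+1), Φ s ≤ ∫ s in Ioi (0:ℝ), Φ s := by
      apply setIntegral_mono_set hΦint
      · filter_upwards [ae_restrict_mem measurableSet_Ioi] with s hs
        exact hΦnn s hs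
      · exact hsub.eventuallyLE
    rw [h2] at h1
    linarith [hεpos]
  -- conclude
  rw [hQ, hswap, setIntegral_congr_fun measurableSet_Ioi hpt, integral_neg]
  apply div_neg_of_neg_of_pos _ mqI_one_pos
  linarith

/-- Micchelli's theorem for the multiquadric kernel: for pairwise distinct nodes
`x₁, …, x_N` in `ℝ^d` and shape parameter `C > 0`, the matrix
`K_{ij} = √(C² + ‖x_i − x_j‖²)` is invertible. -/
theorem multiquadric_matrix_invertible (d N : ℕ) (C : ℝ) (hC : 0 < C)
    (x : Fin N → EuclideanSpace ℝ (Fin d))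
    (hx : Function.Injective x) :
    IsUnit (Matrix.of fun i j : Fin N => Real.sqrt (C ^ 2 + ‖x i - x j‖ ^ 2)) := by
  classical
  set S : Fin N → Fin N → ℝ := fun i j => Real.sqrt (C ^ 2 + ‖x i - x j‖ ^ 2) with hS
  by_contra h
  rw [Matrix.isUnit_iff_isUnit_det, isUnit_iff_ne_zero, not_not] at h
  obtain ⟨v, hv0, hKv⟩ := Matrix.exists_mulVec_eq_zero_iff.mpr h
  have hKv' : ∀ i, ∑ j, S i j * v j = 0 := by
    intro i
    have := congrFun hKv i
    simpa [Matrix.mulVec, dotProduct, hS] using this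
  have hSsymm : ∀ i j, S i j = S j i := by
    intro i j; simp [hS, norm_sub_rev]
  have hrow : ∀ w : Fin N → ℝ, ∑ i, ∑ j, w i * v j * S i j = 0 := by
    intro w
    have : ∀ i : Fin N, ∑ j, w i * v j * S i j = w i * ∑ j, S i j * v j := by
      intro i
      rw [Finset.mul_sum]
      exact Finset.sum_congr rfl fun j _ => by ring
    rw [Finset.sum_congr rfl fun i _ => this i]
    simp [hKv']
  have hcol : ∀ w : Fin N → ℝ, ∑ i, ∑ j, v i * w j * S i j = 0 := by
    intro w
    rw [Finset.sum_comm]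
    calc ∑ j, ∑ i, v i * w j * S i j = ∑ j, ∑ i, w j * v i * S j i := by
          refine Finset.sum_congr rfl fun j _ => Finset.sum_congr rfl fun i _ => ?_
          rw [hSsymm i j]; ring
      _ = 0 := hrow w
  -- quadratic form notation
  by_cases hsv : ∑ i, v i = 0
  · have hneg := quadform_neg d N C hC x hx v hsv hv0
    have hzero : ∑ i, ∑ j, v i * v j * S i j = 0 := hrow v
    rw [hS] at hzero
    linarith
  · -- ∑ v ≠ 0
    obtain ⟨i₀, hi₀⟩ := Function.ne_iff.mp hv0
    set T : ℝ := ∑ i, v i with hT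
    set e : Fin N → ℝ := fun i => if i = i₀ then (1:ℝ) else 0 with he
    set u : Fin N → ℝ := fun i => e i - (1/T) * v i with hu
    have hsum_e : ∑ i, e i = 1 := by simp [he]
    have hsum_u : ∑ i, u i = 0 := by
      simp only [hu, Finset.sum_sub_distrib, ← Finset.mul_sum]
      rw [hsum_e, ← hT]
      field_simp
      ring
    have hQu : ∑ i, ∑ j, u i * u j * S i j ≤ 0 := by
      by_cases hu0 : u = 0
      · simp [hu0]
      · exact le_of_lt (quadform_neg d N C hC x hx u hsum_u hu0)
    have hexpand : ∑ i, ∑ j, e i * e j * S i j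
        = ∑ i, ∑ j, u i * u j * S i j := by
      have hpt : ∀ i j : Fin N, e i * e j * S i j
          = u i * u j * S i j + (1/T) * (u i * v j * S i j)
            + (1/T) * (v i * u j * S i j) + (1/T)^2 * (v i * v j * S i j) := by
        intro i j
        have : e i = u i + (1/T) * v i := by simp [hu]
        rw [this]
        have : e j = u j + (1/T) * v j := by simp [hu]
        rw [this]
        ring
      calc ∑ i, ∑ j, e i * e j * S i j
          = (∑ i, ∑ j, u i * u j * S i j) + (1/T) * (∑ i, ∑ j, u i * v j * S i j)
            + (1/T) * (∑ i, ∑ j, v i * u j * S i j)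
            + (1/T)^2 * (∑ i, ∑ j, v i * v j * S i j) := by
            simp only [Finset.sum_congr rfl fun i (_ : i ∈ Finset.univ) =>
              Finset.sum_congr rfl fun j (_ : j ∈ Finset.univ) => hpt i j]
            simp only [Finset.sum_add_distrib, Finset.mul_sum]
        _ = ∑ i, ∑ j, u i * u j * S i j := by
            rw [hrow u, hcol u, hrow v]
            ring
    have hQe : ∑ i, ∑ j, e i * e j * S i j = C := by
      have : ∀ i j : Fin N, e i * e j * S i j = if i = i₀ ∧ j = i₀ then S i₀ i₀ else 0 := by
        intro i j
        by_cases h1 : i = i₀ <;> by_cases h2 : j = i₀ <;> simp [he, h1, h2]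
      have hS0 : S i₀ i₀ = C := by
        simp only [hS, sub_self, norm_zero]
        rw [show (0:ℝ)^2 = 0 by norm_num, add_zero]
        exact Real.sqrt_sq hC.le
      calc ∑ i, ∑ j, e i * e j * S i j
          = ∑ i, ∑ j, (if i = i₀ ∧ j = i₀ then S i₀ i₀ else 0) :=
            Finset.sum_congr rfl fun i _ => Finset.sum_congr rfl fun j _ => this i j
        _ = S i₀ i₀ := by simp [ite_and, Finset.sum_ite_eq']
        _ = C := hS0
    rw [hexpand] at hQe
    linarith
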